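/- A holomorphic vector field E = f·∂₁ + g·∂₂ on the germ 𝒩₂ = (ℂ²,0) with multiplication ∂₁∘∂₁ = ∂₁, ∂₁∘∂₂ = ∂₂, ∂₂∘∂₂ = 0 satisfies the Euler field equation L_E(∘) = ∘ if and only if f(t₁,t₂) = t₁ + c for some c ∈ ℂ and g depends only on t₂. -/

import Mathlib

open Filter

/-- The multiplication `∘` of vector fields on `𝒩₂ = (ℂ², 0)` determined by
`∂₁∘∂₁ = ∂₁`, `∂₁∘∂₂ = ∂₂`, `∂₂∘∂₂ = 0`, written in components. -/
def circN2 (X Y : ℂ × ℂ → ℂ × ℂ) : ℂ × ℂ → ℂ × ℂ := fun p =>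
  ((X p).1 * (Y p).1, (X p).1 * (Y p).2 + (X p).2 * (Y p).1)

/-- The Lie bracket of holomorphic vector fields on `ℂ²`:
`[X,Y](p) = (DY)_p(X(p)) − (DX)_p(Y(p))`. -/
noncomputable def lieN2 (X Y : ℂ × ℂ → ℂ × ℂ) : ℂ × ℂ → ℂ × ℂ := fun p =>
  (fderiv ℂ Y p) (X p) - (fderiv ℂ X p) (Y p)

lemma clm_apply_eq (T : (ℂ × ℂ) →L[ℂ] ℂ) (v : ℂ × ℂ) :
    T v = v.1 * T (1, 0) + v.2 * T (0, 1) := by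
  have hv : T v = T (v.1 • ((1:ℂ), (0:ℂ)) + v.2 • ((0:ℂ), (1:ℂ))) := by
    congr 1
    simp [Prod.ext_iff]
  rw [hv, map_add, map_smul, map_smul, smul_eq_mul, smul_eq_mul]

lemma fderiv_circN2 {X Y : ℂ × ℂ → ℂ × ℂ} {p : ℂ × ℂ}
    (hX : DifferentiableAt ℂ X p) (hY : DifferentiableAt ℂ Y p) (v : ℂ × ℂ) :
    fderiv ℂ (circN2 X Y) p v =
      ((fderiv ℂ X p v).1 * (Y p).1 + (X p).1 * (fderiv ℂ Y p v).1,
       (fderiv ℂ X p v).1 * (Y p).2 + (X p).1 * (fderiv ℂ Y p v).2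
         + (fderiv ℂ X p v).2 * (Y p).1 + (X p).2 * (fderiv ℂ Y p v).1) := by
  have hX' := hX.hasFDerivAt
  have hY' := hY.hasFDerivAt
  have h1 := hX'.fst.mul hY'.fst
  have h2 := (hX'.fst.mul hY'.snd).add (hX'.snd.mul hY'.fst)
  have key := (h1.prodMk h2).fderiv
  have hc : circN2 X Y = fun p => ((X p).1 * (Y p).1, (X p).1 * (Y p).2 + (X p).2 * (Y p).1) := rfl
  rw [hc]; erw [key]
  simp [ContinuousLinearMap.prod_apply, ContinuousLinearMap.comp_apply, smul_eq_mul]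
  constructor <;> ring

lemma fderiv_pair {f g : ℂ × ℂ → ℂ} {p : ℂ × ℂ}
    (hf : DifferentiableAt ℂ f p) (hg : DifferentiableAt ℂ g p) (v : ℂ × ℂ) :
    fderiv ℂ (fun q => (f q, g q)) p v = (fderiv ℂ f p v, fderiv ℂ g p v) := by
  rw [(hf.hasFDerivAt.prodMk hg.hasFDerivAt).fderiv]; rfl

/-- Lemma `euler-1` i): a holomorphic vector field `E = f·∂₁ + g·∂₂` on the germ `𝒩₂`
satisfies the Euler field equation `L_E(∘) = ∘`, i.e.
`[E, X∘Y] − [E,X]∘Y − X∘[E,Y] = X∘Y` (as germs at `0`) for all holomorphic vector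
fields `X, Y`, if and only if `f(t₁,t₂) = t₁ + c` for some `c ∈ ℂ` and `g` depends
only on `t₂` (near the origin). -/
theorem stmt_9 (f g : ℂ × ℂ → ℂ) (U : Set (ℂ × ℂ)) (hU : U ∈ nhds (0 : ℂ × ℂ))
    (hf : AnalyticOnNhd ℂ f U) (hg : AnalyticOnNhd ℂ g U) :
    (∀ X Y : ℂ × ℂ → ℂ × ℂ, AnalyticOnNhd ℂ X U → AnalyticOnNhd ℂ Y U →
      ∀ᶠ p in nhds (0 : ℂ × ℂ),
        lieN2 (fun q => (f q, g q)) (circN2 X Y) p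
          - circN2 (lieN2 (fun q => (f q, g q)) X) Y p
          - circN2 X (lieN2 (fun q => (f q, g q)) Y) p
        = circN2 X Y p) ↔
    (∃ c : ℂ, ∃ h : ℂ → ℂ, AnalyticAt ℂ h 0 ∧
      ∀ᶠ p in nhds (0 : ℂ × ℂ), f p = p.1 + c ∧ g p = h p.2) := by
  have h0U : (0 : ℂ × ℂ) ∈ U := mem_of_mem_nhds hU
  have hUev : ∀ᶠ p in nhds (0 : ℂ × ℂ), p ∈ U := hU
  constructor
  · intro H
    have c1 : AnalyticOnNhd ℂ (fun _ : ℂ × ℂ => ((1:ℂ),(0:ℂ))) U := fun x _ => analyticAt_const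
    have c2 : AnalyticOnNhd ℂ (fun _ : ℂ × ℂ => ((0:ℂ),(1:ℂ))) U := fun x _ => analyticAt_const
    have H1 := H _ _ c1 c1
    have H2 := H _ _ c2 c2
    have key : ∀ᶠ p in nhds (0 : ℂ × ℂ), p ∈ U ∧ fderiv ℂ f p (1,0) = 1 ∧
        fderiv ℂ f p (0,1) = 0 ∧ fderiv ℂ g p (1,0) = 0 := by
      filter_upwards [H1, H2, hUev] with p e1 e2 hpU
      have hfd : DifferentiableAt ℂ f p := (hf p hpU).differentiableAt
      have hgd : DifferentiableAt ℂ g p := (hg p hpU).differentiableAt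
      have hc1 : circN2 (fun _ : ℂ × ℂ => ((1:ℂ),(0:ℂ))) (fun _ => (1,0)) = fun _ => ((1:ℂ),(0:ℂ)) := by
        funext q; simp [circN2]
      have hc2 : circN2 (fun _ : ℂ × ℂ => ((0:ℂ),(1:ℂ))) (fun _ => (0,1)) = fun _ => ((0:ℂ),(0:ℂ)) := by
        funext q; simp [circN2]
      rw [hc1] at e1
      rw [hc2] at e2
      simp only [lieN2, circN2, fderiv_fun_const, Pi.zero_apply, ContinuousLinearMap.zero_apply,
        zero_sub, fderiv_pair hfd hgd] at e1 e2
      rw [Prod.ext_iff] at e1 e2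
      simp at e1 e2
      exact ⟨hpU, e1.1, (by simpa [Prod.mk_zero_zero] using e2), e1.2⟩
    obtain ⟨r, hr, hball⟩ := Metric.eventually_nhds_iff_ball.mp key
    refine ⟨f 0, fun t => g (0, t), ?_, ?_⟩
    · have h1 : AnalyticAt ℂ (fun t : ℂ => ((0:ℂ), t)) 0 :=
        (ContinuousLinearMap.inr ℂ ℂ ℂ).analyticAt 0
      have h2 : AnalyticAt ℂ g ((fun t : ℂ => ((0:ℂ), t)) 0) := hg 0 h0U
      exact h2.comp h1
    · rw [Metric.eventually_nhds_iff_ball]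
      refine ⟨r, hr, fun p hp => ⟨?_, ?_⟩⟩
      · -- f p = p.1 + f 0
        have hdiff : DifferentiableOn ℂ (fun q : ℂ × ℂ => f q - q.1) (Metric.ball 0 r) :=
          fun q hq => ((hf q (hball q hq).1).differentiableAt.sub differentiableAt_fst).differentiableWithinAt
        have hzero : ∀ q ∈ Metric.ball (0 : ℂ × ℂ) r,
            fderivWithin ℂ (fun q : ℂ × ℂ => f q - q.1) (Metric.ball 0 r) q = 0 := by
          intro q hq
          rw [fderivWithin_of_isOpen Metric.isOpen_ball hq]
          have hφ : HasFDerivAt (fun q : ℂ × ℂ => f q - q.1)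
              (fderiv ℂ f q - ContinuousLinearMap.fst ℂ ℂ ℂ) q :=
            (hf q (hball q hq).1).differentiableAt.hasFDerivAt.sub hasFDerivAt_fst
          rw [hφ.fderiv]
          refine ContinuousLinearMap.ext fun v => ?_
          rw [ContinuousLinearMap.zero_apply, clm_apply_eq]
          simp [ContinuousLinearMap.sub_apply, (hball q hq).2.1, (hball q hq).2.2.1]
        have := (convex_ball (0 : ℂ × ℂ) r).is_const_of_fderivWithin_eq_zero hdiff hzero hp
          (Metric.mem_ball_self hr)
        have h0 : (0 : ℂ × ℂ).1 = 0 := rfl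
        simp only [h0, sub_zero] at this
        linear_combination this
      · -- g p = g (0, p.2)
        have hp2 : ‖p.2‖ < r := lt_of_le_of_lt (norm_snd_le p) (mem_ball_zero_iff.mp hp)
        have hmem : ∀ z ∈ Metric.ball (0:ℂ) r, ((z, p.2) : ℂ × ℂ) ∈ Metric.ball (0 : ℂ × ℂ) r := by
          intro z hz
          rw [mem_ball_zero_iff] at hz ⊢
          rw [Prod.norm_def]
          exact max_lt hz hp2
        have hdiffψ : DifferentiableOn ℂ (fun z : ℂ => g (z, p.2)) (Metric.ball 0 r) := by
          intro z hz
          exact ((hg _ (hball _ (hmem z hz)).1).differentiableAt.comp z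
            (differentiableAt_id.prodMk (differentiableAt_const _))).differentiableWithinAt
        have hzeroψ : ∀ z ∈ Metric.ball (0:ℂ) r,
            fderivWithin ℂ (fun z : ℂ => g (z, p.2)) (Metric.ball 0 r) z = 0 := by
          intro z hz
          rw [fderivWithin_of_isOpen Metric.isOpen_ball hz]
          have h1 : HasFDerivAt (fun z : ℂ => g (z, p.2))
              ((fderiv ℂ g (z, p.2)).comp (ContinuousLinearMap.inl ℂ ℂ ℂ)) z :=
            (hg _ (hball _ (hmem z hz)).1).differentiableAt.hasFDerivAt.comp z
              (hasFDerivAt_prodMk_left z p.2)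
          rw [h1.fderiv]
          apply ContinuousLinearMap.ext_ring
          simpa using (hball _ (hmem z hz)).2.2.2
        have hp1 : p.1 ∈ Metric.ball (0:ℂ) r :=
          mem_ball_zero_iff.mpr (lt_of_le_of_lt (norm_fst_le p) (mem_ball_zero_iff.mp hp))
        have := (convex_ball (0:ℂ) r).is_const_of_fderivWithin_eq_zero hdiffψ hzeroψ hp1
          (Metric.mem_ball_self hr)
        simpa using this
  · rintro ⟨c, h, hh, hev⟩ X Y hX hY
    obtain ⟨r, hr, hball⟩ := Metric.eventually_nhds_iff_ball.mp (hev.and hUev)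
    rw [Metric.eventually_nhds_iff_ball]
    refine ⟨r, hr, fun p hp => ?_⟩
    have hpU : p ∈ U := (hball p hp).2
    have hXd : DifferentiableAt ℂ X p := (hX p hpU).differentiableAt
    have hYd : DifferentiableAt ℂ Y p := (hY p hpU).differentiableAt
    have hfd : DifferentiableAt ℂ f p := (hf p hpU).differentiableAt
    have hgd : DifferentiableAt ℂ g p := (hg p hpU).differentiableAt
    have hDf : ∀ v : ℂ × ℂ, fderiv ℂ f p v = v.1 := by
      intro v
      have hev' : f =ᶠ[nhds p] fun q => q.1 + c := by
        filter_upwards [Metric.isOpen_ball.mem_nhds hp] with q hq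
        exact (hball q hq).1.1
      rw [hev'.fderiv_eq, (hasFDerivAt_fst.add_const c).fderiv]
      rfl
    have hp2 : ‖p.2‖ < r := lt_of_le_of_lt (norm_snd_le p) (mem_ball_zero_iff.mp hp)
    have hmem : ∀ z ∈ Metric.ball (0:ℂ) r, ((z, p.2) : ℂ × ℂ) ∈ Metric.ball (0 : ℂ × ℂ) r := by
      intro z hz
      rw [mem_ball_zero_iff] at hz ⊢
      rw [Prod.norm_def]
      exact max_lt hz hp2
    have hp1 : p.1 ∈ Metric.ball (0:ℂ) r :=
      mem_ball_zero_iff.mpr (lt_of_le_of_lt (norm_fst_le p) (mem_ball_zero_iff.mp hp))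
    have hDg1 : fderiv ℂ g p (1, 0) = 0 := by
      have h1' := HasFDerivAt.comp (𝕜 := ℂ) (g := g) (f := fun z : ℂ => (z, p.2)) p.1
        hgd.hasFDerivAt (hasFDerivAt_prodMk_left p.1 p.2)
      have h1 : HasFDerivAt (fun z : ℂ => g (z, p.2))
          ((fderiv ℂ g p).comp (ContinuousLinearMap.inl ℂ ℂ ℂ)) p.1 := h1'
      have h2 : HasFDerivAt (fun z : ℂ => g (z, p.2)) (0 : ℂ →L[ℂ] ℂ) p.1 := by
        have heq : (fun z : ℂ => g (z, p.2)) =ᶠ[nhds p.1] fun _ => h p.2 := by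
          filter_upwards [Metric.isOpen_ball.mem_nhds hp1] with z hz
          exact (hball (z, p.2) (hmem z hz)).1.2
        exact (hasFDerivAt_const (h p.2) p.1).congr_of_eventuallyEq heq
      have h3 := h1.unique h2
      have h4 : fderiv ℂ g p (1, 0) = ((fderiv ℂ g p).comp (ContinuousLinearMap.inl ℂ ℂ ℂ)) 1 := by
        simp
      rw [h4, h3]
      rfl
    have hEapp : ∀ v : ℂ × ℂ,
        fderiv ℂ (fun q => (f q, g q)) p v = (v.1, v.2 * fderiv ℂ g p (0,1)) := by
      intro v
      rw [fderiv_pair hfd hgd, hDf]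
      have := clm_apply_eq (fderiv ℂ g p) v
      rw [this, hDg1]
      simp
    simp only [lieN2, fderiv_circN2 hXd hYd, hEapp, circN2]
    rw [Prod.ext_iff]
    constructor <;> · simp; ring
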